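/- If H is an isometric subgraph of a connected graph G and c is an exact r-coloring of G that contains no rainbow k-AP, then the number of distinct colors that c uses on the vertices of H is at most aw(H,k) − 1. -/

import Mathlib

open SimpleGraph

/-- `v` lists the vertices of a `k`-term arithmetic progression in `G`:
consecutive vertices are at a common distance `d`. -/
def IsAPIn {V : Type*} (G : SimpleGraph V) (k : ℕ) (v : Fin k → V) : Prop :=
  ∃ d : ℕ, ∀ (i : ℕ) (h : i + 1 < k),
    G.dist (v ⟨i, by omega⟩) (v ⟨i + 1, h⟩) = d

/-- The coloring `c` admits a rainbow `k`-AP in `G`: a `k`-AP whose vertices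
are pairwise distinct and receive pairwise distinct colors. -/
def HasRainbowAP {V α : Type*} (G : SimpleGraph V) (k : ℕ) (c : V → α) : Prop :=
  ∃ v : Fin k → V, IsAPIn G k v ∧ Function.Injective (c ∘ v)

/-- The anti-van der Waerden number `aw(G,k)`: the least positive `r` such that
every exact `r`-coloring of `G` contains a rainbow `k`-AP.  (For `r = |V(G)|+1`
there is no surjection onto `r` colors, so the defining set is nonempty and
`aw(G,k) ≤ |V(G)|+1` automatically, matching the convention.) -/
noncomputable def aw {V : Type*} [Fintype V] (G : SimpleGraph V) (k : ℕ) : ℕ :=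
  sInf {r : ℕ | 0 < r ∧ ∀ c : V → Fin r, Function.Surjective c → HasRainbowAP G k c}

/-- If `H` is an isometric subgraph of a connected graph `G` and
`c` is an exact `r`-coloring of `G` with no rainbow `k`-AP, then the number of
colors that `c` uses on the vertices of `H` is at most `aw(H,k) - 1`. -/
theorem isometric_colors_le {V W : Type*} [Fintype V] [Fintype W]
    (G : SimpleGraph V) (H : SimpleGraph W)
    (hG : G.Connected) (hH : H.Connected) (f : W → V) (hf : Function.Injective f)
    (hsub : ∀ a b : W, H.Adj a b → G.Adj (f a) (f b))
    (hiso : ∀ a b : W, H.dist a b = G.dist (f a) (f b))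
    (k r : ℕ) (c : V → Fin r) (hc : Function.Surjective c)
    (hnr : ¬ HasRainbowAP G k c) :
    ((Finset.univ : Finset W).image (c ∘ f)).card ≤ aw H k - 1 := by
  set S := {r : ℕ | 0 < r ∧ ∀ c : W → Fin r, Function.Surjective c → HasRainbowAP H k c}
  set s : Finset (Fin r) := (Finset.univ : Finset W).image (c ∘ f) with hs
  set m := s.card with hm
  -- S is nonempty
  have hSne : S.Nonempty := by
    refine ⟨Fintype.card W + 1, Nat.succ_pos _, ?_⟩
    intro c' hc'
    exfalso
    have := Fintype.card_le_of_surjective c' hc'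
    simp at this
  -- every element of S is > m
  have hkey : ∀ t ∈ S, m < t := by
    intro t ht
    by_contra hle
    push_neg at hle
    obtain ⟨htpos, hall⟩ := ht
    -- choose a subset of s of size t
    obtain ⟨s', hs'sub, hs'card⟩ := Finset.exists_subset_card_eq (s := s) (n := t) hle
    set e : Fin t ↪o Fin r := s'.orderEmbOfFin hs'card with he
    have hemem : ∀ j, (e j) ∈ s := fun j => hs'sub (s'.orderEmbOfFin_mem hs'card j)
    -- merging map g
    set g : Fin r → Fin t := fun x =>
      if h : ∃ j, e j = x then h.choose else ⟨0, htpos⟩ with hg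
    have hge : ∀ j, g (e j) = j := by
      intro j
      have h : ∃ j', e j' = e j := ⟨j, rfl⟩
      have := h.choose_spec
      simp only [hg, dif_pos h]
      exact e.injective this
    have hsurj : Function.Surjective (g ∘ c ∘ f) := by
      intro j
      have : (e j) ∈ s := hemem j
      simp only [hs, Finset.mem_image] at this
      obtain ⟨w, _, hw⟩ := this
      refine ⟨w, ?_⟩
      have hw' : c (f w) = e j := hw
      simp only [Function.comp, hw', hge j]
    obtain ⟨v, ⟨d, hd⟩, hinj⟩ := hall (g ∘ c ∘ f) hsurj
    apply hnr
    refine ⟨f ∘ v, ⟨d, fun i h => ?_⟩, fun a b hab => ?_⟩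
    · simp only [Function.comp]; rw [← hiso]; exact hd i h
    · apply hinj
      simp only [Function.comp] at hab ⊢
      rw [hab]
  have hlt : m < aw H k := by
    have : sInf S ∈ S := Nat.sInf_mem hSne
    exact hkey _ this
  omega
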